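/- In the field ℚ(q) of rational functions in one variable q over ℚ, the G₂ coefficients a = q⁵ + q⁴ + q + 1 + q⁻¹ + q⁻⁴ + q⁻⁵, b = −(q³ + q² + q + q⁻¹ + q⁻² + q⁻³), c = q² + 1 + q⁻², d₁ = −(q + q⁻¹), d₂ = q + 1 + q⁻¹, e₁ = 1, e₂ = −1 satisfy all eleven consistency equations: (1) b² = b·d₁ + d₂ + a·d₂; (2) c² = b·d₁ + c·d₁ + d₂; (3) b·c = 2·e₁·b + 2·e₂ + a·e₂ + e₁·c; (4) c·d₁ = d₁·e₁ + c·e₁ + b·e₁ + e₂; (5) c·d₂ = d₂·e₁ + b·e₂; (6) d₁·e₁ + d₂ = e₁²; (7) d₁·e₁ + d₁² = e₁² + c·e₁ + d₁·e₁; (8) d₁·e₁ = e₁² + d₁·e₁ + e₂; (9) d₁·e₂ + d₂·c = e₁·e₂ + b·e₂ + 2·d₂·e₁; (10) d₁·e₂ = e₁·e₂ + d₂·e₁; (11) d₁·e₂ + d₁·d₂ = e₁·e₂ + e₂·c. -/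
import Mathlib


/-- The explicit G₂ coefficients in `ℚ(q)` satisfy all eleven consistency
equations forced by the 1,0,1,1,4,10 Ansatz. -/
theorem g2_coefficients_satisfy_consistency
    (q a b c d₁ d₂ e₁ e₂ : RatFunc ℚ)
    (hq : q = RatFunc.X)
    (ha : a = q ^ 5 + q ^ 4 + q + 1 + q⁻¹ + (q ^ 4)⁻¹ + (q ^ 5)⁻¹)
    (hb : b = -(q ^ 3 + q ^ 2 + q + q⁻¹ + (q ^ 2)⁻¹ + (q ^ 3)⁻¹))
    (hc : c = q ^ 2 + 1 + (q ^ 2)⁻¹)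
    (hd₁ : d₁ = -(q + q⁻¹))
    (hd₂ : d₂ = q + 1 + q⁻¹)
    (he₁ : e₁ = 1)
    (he₂ : e₂ = -1) :
    b ^ 2 = b * d₁ + d₂ + a * d₂ ∧
    c ^ 2 = b * d₁ + c * d₁ + d₂ ∧
    b * c = 2 * e₁ * b + 2 * e₂ + a * e₂ + e₁ * c ∧
    c * d₁ = d₁ * e₁ + c * e₁ + b * e₁ + e₂ ∧
    c * d₂ = d₂ * e₁ + b * e₂ ∧
    d₁ * e₁ + d₂ = e₁ ^ 2 ∧
    d₁ * e₁ + d₁ ^ 2 = e₁ ^ 2 + c * e₁ + d₁ * e₁ ∧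
    d₁ * e₁ = e₁ ^ 2 + d₁ * e₁ + e₂ ∧
    d₁ * e₂ + d₂ * c = e₁ * e₂ + b * e₂ + 2 * d₂ * e₁ ∧
    d₁ * e₂ = e₁ * e₂ + d₂ * e₁ ∧
    d₁ * e₂ + d₁ * d₂ = e₁ * e₂ + e₂ * c := by
  have hq0 : q ≠ 0 := hq ▸ RatFunc.X_ne_zero
  have hr : q * q⁻¹ = 1 := mul_inv_cancel₀ hq0
  set r := q⁻¹ with hrdef
  subst ha hb hc hd₁ hd₂ he₁ he₂
  simp only [← inv_pow, ← hrdef]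
  refine ⟨?_, ?_, ?_, ?_, ?_, ?_, ?_, ?_, ?_, ?_, ?_⟩
  · linear_combination (-q ^ 4 - q ^ 3 + 2 * q ^ 2 * r ^ 2 + 2 * q ^ 2 * r + q ^ 2
      + 2 * q * r ^ 2 + 4 * q * r + 3 * q - r ^ 4 - r ^ 3 + r ^ 2 + 3 * r + 2) * hr
  · linear_combination (-q ^ 2 + 2 * q * r - r ^ 2) * hr
  · linear_combination (-q ^ 2 * r - q * r ^ 2 - 2 * q * r - 2 * q - 2 * r - 2) * hr
  · linear_combination (-q - r) * hr
  · linear_combination (q + r) * hr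
  · linear_combination 0 * hr
  · linear_combination (2 : RatFunc ℚ) * hr
  · linear_combination 0 * hr
  · linear_combination (q + r) * hr
  · linear_combination 0 * hr
  · linear_combination (-2 : RatFunc ℚ) * hr
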